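/- arXiv:1409.6627 — 2 statements merged into one kernel-verified Lean document; each statement's English description precedes it below -/
import Mathlib

section
/- Let k be a field, Π = (V, W) a presentation on a set E over k, and F a finite subset of E. Then there are disjoint subsets P_F and Q_F of E∖F such that E∖(P_F ∪ Q_F) is finite, and such that, setting Π' = Π/P_F ∖ Q_F, one has Π'↾F = Π↾F and Π'.F = Π.F. -/
open Function Set

noncomputable section

variable {α k : Type*} [Field k]

/-- Axiom (O2) for a pair of families of subsets of the ground set `E`. -/
def AxO2 (E : Set α) (𝒞 𝒟 : Set (Set α)) : Prop :=
  ∀ P Q : Set α, ∀ e : α, Disjoint P Q → e ∉ P → e ∉ Q → P ∪ Q ∪ {e} = E →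
    (∃ C ∈ 𝒞, e ∈ C ∧ C ⊆ P ∪ {e}) ∨ (∃ D ∈ 𝒟, e ∈ D ∧ D ⊆ Q ∪ {e})

/-- Two vectors are orthogonal: supports intersect finitely and the sum of products is zero. -/
def Orthog (v w : α → k) : Prop :=
  (support v ∩ support w).Finite ∧ ∑ᶠ e, v e * w e = 0

/-- The subspace of `k^α` of functions supported in `E` (the formal meaning of `k^E`). -/
def FunOn (E : Set α) : Submodule k (α → k) where
  carrier := {v | support v ⊆ E}
  add_mem' hf hg := (support_add _ _).trans (union_subset hf hg)
  zero_mem' := by simp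
  smul_mem' c f hf := (support_const_smul_subset c f).trans hf

/-- The set `S(V)` of supports of elements of `V`. -/
def suppSet (V : Submodule k (α → k)) : Set (Set α) := support '' (V : Set (α → k))

/-- A presentation on the ground set `E` over `k`: a pair of orthogonal subspaces of `k^E`
whose families of supports satisfy (O2). -/
def IsPresentationOn (E : Set α) (V W : Submodule k (α → k)) : Prop :=
  V ≤ FunOn E ∧ W ≤ FunOn E ∧ (∀ v ∈ V, ∀ w ∈ W, Orthog v w) ∧
    AxO2 E (suppSet V) (suppSet W)

/-- Minimal nonempty elements of a family of sets. -/
def MinNE (𝒜 : Set (Set α)) (o : Set α) : Prop :=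
  o ∈ 𝒜 ∧ o.Nonempty ∧ ∀ o' ∈ 𝒜, o'.Nonempty → o' ⊆ o → o' = o

/-- A circuit of a matroid: a minimal dependent set. -/
def MatCircuit (M : Matroid α) (C : Set α) : Prop := Minimal M.Dep C

/-- The pair `(V, W)` presents the matroid `M` on ground set `E`. -/
def Presents (E : Set α) (V W : Submodule k (α → k)) (M : Matroid α) : Prop :=
  M.E = E ∧ (∀ C, MatCircuit M C ↔ MinNE (suppSet V) C) ∧
    (∀ D, MatCircuit M✶ D ↔ MinNE (suppSet W) D)

/-- Restriction of a vector to `X`, as a linear endomap of `k^α` (zeroing outside `X`). -/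
def indLM (X : Set α) : (α → k) →ₗ[k] (α → k) where
  toFun v := X.indicator v
  map_add' f g := by
    funext a
    by_cases h : a ∈ X <;> simp [Set.indicator_of_mem, Set.indicator_of_notMem, h]
  map_smul' c f := by
    funext a
    by_cases h : a ∈ X <;> simp [Set.indicator_of_mem, Set.indicator_of_notMem, h]

/-- Contraction `V.X` of a subspace to `X`. -/
def conV (V : Submodule k (α → k)) (X : Set α) : Submodule k (α → k) :=
  Submodule.map (indLM X) V

/-- Restriction of a pair `(V,W)` to the ground set `X`: `(V↾X, W.X)`. -/
def pairRes (Pr : Submodule k (α → k) × Submodule k (α → k)) (X : Set α) :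
    Submodule k (α → k) × Submodule k (α → k) :=
  (Pr.1 ⊓ FunOn X, conV Pr.2 X)

/-- Contraction of a pair `(V,W)` to the ground set `X`: `(V.X, W↾X)`. -/
def pairCon (Pr : Submodule k (α → k) × Submodule k (α → k)) (X : Set α) :
    Submodule k (α → k) × Submodule k (α → k) :=
  (conV Pr.1 X, Pr.2 ⊓ FunOn X)

/-- A set `I` is `Π`-independent (w.r.t. the vector subspace `V`): it includes no
nonempty support of a vector. -/
def PresIndep (V : Submodule k (α → k)) (I : Set α) : Prop :=
  ∀ v ∈ V, support v ⊆ I → v = 0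

end

section Aux

open Function Set

variable {α k : Type*} [Field k]

lemma indLM_apply' (X : Set α) (v : α → k) : indLM X v = X.indicator v := rfl

lemma Orthog.symm' {v w : α → k} (h : Orthog v w) : Orthog w v := by
  obtain ⟨h1, h2⟩ := h
  refine ⟨by rwa [Set.inter_comm], ?_⟩
  simpa [mul_comm] using h2

lemma AxO2.symm {E : Set α} {C D : Set (Set α)} (h : AxO2 E C D) : AxO2 E D C := by
  intro P Q e hPQ heP heQ hE
  have := h Q P e hPQ.symm heQ heP (by rw [Set.union_comm Q P]; exact hE)
  exact this.symm

/-- The restriction-to-`F` and `X`-indicator of `v` agree if the `X`-indicator is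
supported in `F ⊆ X`. -/
lemma ind_eq_ind {F X : Set α} (hFX : F ⊆ X) {v : α → k}
    (h : support (X.indicator v) ⊆ F) : X.indicator v = F.indicator v := by
  funext a
  by_cases haF : a ∈ F
  · rw [Set.indicator_of_mem (hFX haF), Set.indicator_of_mem haF]
  · rw [Set.indicator_of_notMem haF]
    by_contra hne
    exact haF (h hne)

/-- Any subspace of functions supported on a finite set is finitely generated. -/
lemma fg_of_le_funOn {F : Set α} (hF : F.Finite) (U : Submodule k (α → k))
    (hU : U ≤ FunOn F) : U.FG := by
  haveI : Fintype F := hF.fintype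
  set L : (α → k) →ₗ[k] (F → k) := LinearMap.funLeft k k Subtype.val with hL
  have hinj : Function.Injective (L.comp U.subtype) := by
    rw [← LinearMap.ker_eq_bot, LinearMap.ker_eq_bot']
    intro u hu
    have h0 : (u : α → k) = 0 := by
      funext a
      by_cases ha : a ∈ F
      · simpa [hL, LinearMap.funLeft] using congrFun hu ⟨a, ha⟩
      · exact Function.notMem_support.mp fun hs => ha (hU u.2 hs)
    exact Subtype.ext h0
  haveI : FiniteDimensional k U := FiniteDimensional.of_injective (L.comp U.subtype) hinj
  exact Module.Finite.iff_fg.mp ‹_›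

/-- A finite family in `V` whose `F`-restrictions span `V.F`. -/
lemma exists_spanning_family {F : Set α} (hF : F.Finite) (V : Submodule k (α → k)) :
    ∃ S : Finset (α → k), (∀ u ∈ S, u ∈ V) ∧
      conV V F ≤ Submodule.span k ((fun u => F.indicator u) '' (S : Set (α → k))) := by
  classical
  have hle : conV V F ≤ FunOn F := by
    rintro x ⟨v, hv, rfl⟩
    exact Set.support_indicator_subset
  obtain ⟨T, hT⟩ := fg_of_le_funOn hF _ hle
  have hlift : ∀ t ∈ T, ∃ u, u ∈ V ∧ F.indicator u = t := by
    intro t ht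
    have : t ∈ conV V F := hT ▸ Submodule.subset_span ht
    obtain ⟨u, hu, he⟩ := this
    exact ⟨u, hu, he⟩
  choose f hf1 hf2 using hlift
  refine ⟨T.attach.image (fun t => f t.1 t.2), ?_, ?_⟩
  · intro u hu
    simp only [Finset.mem_image, Finset.mem_attach, true_and, Subtype.exists] at hu
    obtain ⟨t, ht, rfl⟩ := hu
    exact hf1 t ht
  · rw [← hT]
    apply Submodule.span_le.mpr
    intro t ht
    refine Submodule.subset_span ⟨f t ht, ?_, hf2 t ht⟩
    simp only [Finset.coe_image, Set.mem_image, Finset.mem_coe, Finset.mem_attach,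
      Finset.mem_coe]
    exact ⟨⟨t, ht⟩, by simp, rfl⟩

/-- **Key lemma**: by (O2), every finitely supported vector on `E` orthogonal to all of `W`
belongs to `V`. -/
lemma mem_of_orthogonal {E : Set α} {V W : Submodule k (α → k)}
    (hO2 : AxO2 E (suppSet V) (suppSet W))
    (horth : ∀ v ∈ V, ∀ w ∈ W, ∑ᶠ e, v e * w e = 0) (n : ℕ) :
    ∀ (x : α → k) (hfin : (support x).Finite), hfin.toFinset.card ≤ n →
      support x ⊆ E → (∀ w ∈ W, ∑ᶠ e, x e * w e = 0) → x ∈ V := by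
  classical
  induction n with
  | zero =>
    intro x hfin hcard hxE hx
    have hsupp : support x = ∅ := by
      have h0 := Finset.card_eq_zero.mp (Nat.le_zero.mp hcard)
      rw [Set.Finite.toFinset_eq_empty] at h0
      exact h0
    have : x = 0 := support_eq_empty_iff.mp hsupp
    simp [this]
  | succ n ih =>
    intro x hfin hcard hxE hx
    rcases eq_or_ne x 0 with rfl | hx0
    · exact V.zero_mem
    obtain ⟨e, he⟩ := support_nonempty_iff.mpr hx0
    have hpart : (support x \ {e}) ∪ (E \ support x) ∪ {e} = E := by
      ext a
      simp only [Set.mem_union, Set.mem_diff, Set.mem_singleton_iff]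
      constructor
      · rintro ((⟨h1, _⟩ | ⟨h1, _⟩) | rfl)
        · exact hxE h1
        · exact h1
        · exact hxE he
      · intro haE
        by_cases hax : a ∈ support x
        · by_cases hae : a = e
          · exact Or.inr hae
          · exact Or.inl (Or.inl ⟨hax, hae⟩)
        · exact Or.inl (Or.inr ⟨haE, hax⟩)
    have hdisj : Disjoint (support x \ {e}) (E \ support x) := by
      rw [Set.disjoint_left]
      rintro a ⟨h1, _⟩ ⟨_, h2⟩
      exact h2 h1
    have heP : e ∉ support x \ {e} := fun h => h.2 rfl
    have heQ : e ∉ E \ support x := fun h => h.2 he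
    rcases hO2 _ _ e hdisj heP heQ hpart with ⟨C, hC, heC, hCsub⟩ | ⟨D, hD, heD, hDsub⟩
    · obtain ⟨v, hvV, rfl⟩ := hC
      have hvx : support v ⊆ support x := by
        intro a ha
        rcases hCsub ha with ⟨h1, _⟩ | h1
        · exact h1
        · rw [Set.mem_singleton_iff] at h1; exact h1 ▸ he
      have hve : v e ≠ 0 := heC
      set c := x e / v e with hc
      set x' := x - c • v with hx'def
      have hx'supp : support x' ⊆ support x \ {e} := by
        intro a ha
        constructor
        · by_contra hax
          have h1 : x a = 0 := Function.notMem_support.mp hax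
          have h2 : v a = 0 := Function.notMem_support.mp fun h => hax (hvx h)
          exact ha (by simp [hx'def, h1, h2])
        · intro hae
          rw [Set.mem_singleton_iff] at hae
          subst hae
          apply ha
          simp only [hx'def, Pi.sub_apply, Pi.smul_apply, smul_eq_mul, hc]
          rw [div_mul_cancel₀ _ hve, sub_self]
      have hfin' : (support x').Finite := hfin.subset (hx'supp.trans Set.diff_subset)
      have hcard' : hfin'.toFinset.card ≤ n := by
        have hsub : hfin'.toFinset ⊆ hfin.toFinset.erase e := by
          intro a ha
          rw [Set.Finite.mem_toFinset] at ha
          have := hx'supp ha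
          rw [Finset.mem_erase, Set.Finite.mem_toFinset]
          exact ⟨fun h => this.2 (h ▸ rfl), this.1⟩
        have h1 := Finset.card_le_card hsub
        have h2 : (hfin.toFinset.erase e).card = hfin.toFinset.card - 1 :=
          Finset.card_erase_of_mem (by rwa [Set.Finite.mem_toFinset])
        omega
      have hx'sum : ∀ w ∈ W, ∑ᶠ a, x' a * w a = 0 := by
        intro w hw
        have hs1 : support (fun a => x' a * w a) ⊆ (hfin.toFinset : Set α) := by
          intro a ha
          have : x' a ≠ 0 := fun h => ha (by simp [h])
          rw [Set.Finite.coe_toFinset]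
          exact (hx'supp this).1
        have hs2 : support (fun a => x a * w a) ⊆ (hfin.toFinset : Set α) := by
          intro a ha
          have : x a ≠ 0 := fun h => ha (by simp [h])
          rw [Set.Finite.coe_toFinset]
          exact this
        have hs3 : support (fun a => v a * w a) ⊆ (hfin.toFinset : Set α) := by
          intro a ha
          have : v a ≠ 0 := fun h => ha (by simp [h])
          rw [Set.Finite.coe_toFinset]
          exact hvx this
        rw [finsum_eq_finset_sum_of_support_subset _ hs1]
        have e2 := finsum_eq_finset_sum_of_support_subset _ hs2
        have e3 := finsum_eq_finset_sum_of_support_subset _ hs3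
        have hxw := hx w hw
        have hvw := horth v hvV w hw
        rw [e2] at hxw
        rw [e3] at hvw
        calc ∑ a ∈ hfin.toFinset, x' a * w a
            = ∑ a ∈ hfin.toFinset, (x a * w a - c * (v a * w a)) := by
              apply Finset.sum_congr rfl
              intro a _
              simp [hx'def, sub_mul, mul_assoc]
          _ = (∑ a ∈ hfin.toFinset, x a * w a) - c * ∑ a ∈ hfin.toFinset, (v a * w a) := by
              rw [Finset.sum_sub_distrib, Finset.mul_sum]
          _ = 0 := by rw [hxw, hvw, mul_zero, sub_zero]
      have hx'V := ih x' hfin' hcard' ((hx'supp.trans Set.diff_subset).trans hxE) hx'sum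
      have : x = x' + c • v := by simp [hx'def]
      rw [this]
      exact V.add_mem hx'V (V.smul_mem _ hvV)
    · exfalso
      obtain ⟨w, hwW, rfl⟩ := hD
      have hsum : ∑ᶠ a, x a * w a = x e * w e := by
        apply finsum_eq_single
        intro b hb
        by_cases hxb : x b = 0
        · simp [hxb]
        · have hbx : b ∈ support x := hxb
          have : b ∉ support w := by
            intro hbw
            rcases hDsub hbw with ⟨_, h2⟩ | h2
            · exact h2 hbx
            · rw [Set.mem_singleton_iff] at h2; exact hb h2
          rw [Function.notMem_support.mp this, mul_zero]
      have := hx w hwW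
      rw [hsum] at this
      exact mul_ne_zero he heD this

/-- **Crux lemma**: if `v ∈ V` meets the supports of a spanning family for `W.F` only
inside `F`, then `v↾F ∈ V`. -/
lemma indicator_mem_of_inter_subset {E F : Set α} {V W : Submodule k (α → k)}
    (hO2 : AxO2 E (suppSet V) (suppSet W))
    (horth : ∀ v ∈ V, ∀ w ∈ W, Orthog v w)
    (hFE : F ⊆ E) (hFfin : F.Finite)
    (Wf : Finset (α → k)) (hWfW : ∀ u ∈ Wf, u ∈ W)
    (hspan : conV W F ≤ Submodule.span k ((fun u => F.indicator u) '' (Wf : Set (α → k))))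
    {v : α → k} (hv : v ∈ V) (hvB : ∀ u ∈ Wf, support v ∩ support u ⊆ F) :
    F.indicator v ∈ V := by
  classical
  have horth' : ∀ a ∈ V, ∀ b ∈ W, ∑ᶠ e, a e * b e = 0 := fun a ha b hb => (horth a ha b hb).2
  have hsupp : support (F.indicator v) ⊆ F := Set.support_indicator_subset
  have hfin : (support (F.indicator v)).Finite := hFfin.subset hsupp
  refine mem_of_orthogonal hO2 horth' hfin.toFinset.card _ hfin le_rfl (hsupp.trans hFE) ?_
  intro w hw
  set s := hFfin.toFinset with hs
  let L : (α → k) →ₗ[k] k :=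
    { toFun := fun y => ∑ a ∈ s, v a * y a
      map_add' := by intro y z; simp [mul_add, Finset.sum_add_distrib]
      map_smul' := by intro c y; simp [Finset.mul_sum, mul_left_comm] }
  have hLind : ∀ y : α → k, L (F.indicator y) = L y := by
    intro y
    apply Finset.sum_congr rfl
    intro a ha
    rw [Set.indicator_of_mem (by rwa [hs, Set.Finite.mem_toFinset] at ha)]
  have hker : ∀ u ∈ Wf, L (F.indicator u) = 0 := by
    intro u hu
    rw [hLind]
    have h1 : support (fun a => v a * u a) ⊆ (s : Set α) := by
      intro a ha
      have hva : v a ≠ 0 := fun h => ha (by simp [h])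
      have hua : u a ≠ 0 := fun h => ha (by simp [h])
      rw [hs, Set.Finite.coe_toFinset]
      exact hvB u hu ⟨hva, hua⟩
    have : (L u : k) = ∑ᶠ a, v a * u a := (finsum_eq_finset_sum_of_support_subset _ h1).symm
    rw [this]
    exact horth' v hv u (hWfW u hu)
  have hspan0 : Submodule.span k ((fun u => F.indicator u) '' (Wf : Set (α → k)))
      ≤ LinearMap.ker L := by
    rw [Submodule.span_le]
    rintro y ⟨u, hu, rfl⟩
    exact hker u hu
  have hwmem : F.indicator w ∈ conV W F := ⟨w, hw, rfl⟩
  have hLw : L (F.indicator w) = 0 := hspan0 (hspan hwmem)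
  rw [hLind] at hLw
  have h2 : support (fun a => F.indicator v a * w a) ⊆ (s : Set α) := by
    intro a ha
    have : F.indicator v a ≠ 0 := fun h => ha (by simp [h])
    rw [hs, Set.Finite.coe_toFinset]
    exact hsupp this
  rw [finsum_eq_finset_sum_of_support_subset _ h2]
  calc ∑ a ∈ s, F.indicator v a * w a
      = ∑ a ∈ s, v a * w a := by
        apply Finset.sum_congr rfl
        intro a ha
        rw [Set.indicator_of_mem (by rwa [hs, Set.Finite.mem_toFinset] at ha)]
    _ = 0 := hLw

end Aux


/-- For a presentation `Π = (V, W)` on `E` and a finite `F ⊆ E` there are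
disjoint `P_F, Q_F ⊆ E ∖ F` with `E ∖ (P_F ∪ Q_F)` finite such that, for
`Π' = Π/P_F∖Q_F`, we have `Π'↾F = Π↾F` and `Π'.F = Π.F`. -/
theorem exists_finite_reduction {α k : Type*} [Field k]
    (E : Set α) (V W : Submodule k (α → k)) (h : IsPresentationOn E V W)
    (F : Set α) (hF : F ⊆ E) (hFfin : F.Finite) :
    ∃ PF QF : Set α, PF ⊆ E \ F ∧ QF ⊆ E \ F ∧ Disjoint PF QF ∧
      (E \ (PF ∪ QF)).Finite ∧
      pairRes (pairRes (pairCon (V, W) (E \ PF)) (E \ (PF ∪ QF))) F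
        = pairRes (V, W) F ∧
      pairCon (pairRes (pairCon (V, W) (E \ PF)) (E \ (PF ∪ QF))) F
        = pairCon (V, W) F := by
  classical
  obtain ⟨hVE, hWE, horth, hO2⟩ := h
  have horthWV : ∀ w ∈ W, ∀ v ∈ V, Orthog w v := fun w hw v hv => (horth v hv w hw).symm'
  obtain ⟨Vf, hVfV, hVspan⟩ := exists_spanning_family hFfin V
  obtain ⟨Wf, hWfW, hWspan⟩ := exists_spanning_family hFfin W
  set A : Set α := ⋃ u ∈ Vf, support u with hA
  set B : Set α := ⋃ u ∈ Wf, support u with hB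
  have hABfin : (A ∩ B).Finite := by
    have hsub : A ∩ B ⊆ ⋃ u ∈ Vf, ⋃ u' ∈ Wf, (support u ∩ support u') := by
      rintro a ⟨haA, haB⟩
      simp only [hA, hB, Set.mem_iUnion] at haA haB ⊢
      obtain ⟨u, hu, hau⟩ := haA
      obtain ⟨u', hu', hau'⟩ := haB
      exact ⟨u, hu, u', hu', hau, hau'⟩
    exact (Set.Finite.biUnion Vf.finite_toSet fun u hu =>
      Set.Finite.biUnion Wf.finite_toSet fun u' hu' =>
        (horth u (hVfV u hu) u' (hWfW u' hu')).1).subset hsub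
  set G : Set α := F ∪ (A ∩ B) with hG
  have hGfin : G.Finite := hFfin.union hABfin
  set P : Set α := (A ∩ E) \ G with hP
  set Q : Set α := E \ (A ∪ G) with hQ
  have hPF : P ⊆ E \ F := fun a ha => ⟨ha.1.2, fun haF => ha.2 (Or.inl haF)⟩
  have hQF : Q ⊆ E \ F := fun a ha => ⟨ha.1, fun haF => ha.2 (Or.inr (Or.inl haF))⟩
  have hPQ : Disjoint P Q := by
    rw [Set.disjoint_left]
    intro a haP haQ
    exact haQ.2 (Or.inl haP.1.1)
  have hcof : (E \ (P ∪ Q)).Finite := by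
    apply hGfin.subset
    rintro a ⟨haE, ha⟩
    by_cases haG : a ∈ G
    · exact haG
    · exfalso
      apply ha
      by_cases haA : a ∈ A
      · exact Or.inl ⟨⟨haA, haE⟩, haG⟩
      · exact Or.inr ⟨haE, fun h => h.elim haA haG⟩
  set X : Set α := E \ P with hX
  set Y : Set α := E \ (P ∪ Q) with hY
  have hFX : F ⊆ X := fun a ha => ⟨hF ha, fun haP => (hPF haP).2 ha⟩
  have hFY : F ⊆ Y := fun a ha =>
    ⟨hF ha, fun h => h.elim (fun haP => (hPF haP).2 ha) (fun haQ => (hQF haQ).2 ha)⟩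
  have hBP : ∀ a, a ∈ B → a ∉ P := by
    intro a haB haP
    exact haP.2 (Or.inr ⟨haP.1.1, haB⟩)
  have hAQ : ∀ a, a ∈ A → a ∉ Q := by
    intro a haA haQ
    exact haQ.2 (Or.inl haA)
  have hmemB : ∀ u ∈ Wf, support u ⊆ B := by
    intro u hu a ha
    simp only [hB, Set.mem_iUnion]
    exact ⟨u, hu, ha⟩
  have hmemA : ∀ u ∈ Vf, support u ⊆ A := by
    intro u hu a ha
    simp only [hA, Set.mem_iUnion]
    exact ⟨u, hu, ha⟩
  -- the four subspace identities
  have hG1a : (conV V X ⊓ FunOn Y) ⊓ FunOn F = V ⊓ FunOn F := by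
    apply le_antisymm
    · rintro x ⟨⟨hxc, hxY⟩, hxF⟩
      obtain ⟨v, hvV, rfl⟩ := hxc
      rw [indLM_apply'] at hxF hxY ⊢
      have hsupp : support (X.indicator v) ⊆ F := hxF
      have heq : X.indicator v = F.indicator v := ind_eq_ind hFX hsupp
      have hvB : ∀ u ∈ Wf, support v ∩ support u ⊆ F := by
        rintro u hu a ⟨hav, hau⟩
        have haE : a ∈ E := hVE hvV hav
        have haX : a ∈ X := ⟨haE, hBP a (hmemB u hu hau)⟩
        apply hsupp
        rw [Set.support_indicator]
        exact ⟨haX, hav⟩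
      have hmem := indicator_mem_of_inter_subset hO2 horth hF hFfin Wf hWfW hWspan hvV hvB
      rw [heq]
      exact ⟨hmem, heq ▸ hxF⟩
    · rintro x ⟨hxV, hxF⟩
      have hxF' : support x ⊆ F := hxF
      refine ⟨⟨⟨x, hxV, ?_⟩, ?_⟩, hxF⟩
      · rw [indLM_apply', Set.indicator_eq_self]
        exact hxF'.trans hFX
      · exact hxF'.trans hFY
  have hG1b : conV (conV (W ⊓ FunOn X) Y) F = conV W F := by
    apply le_antisymm
    · rintro x ⟨y, hy, rfl⟩
      obtain ⟨w, hw, rfl⟩ := hy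
      obtain ⟨hwW, _⟩ := hw
      refine ⟨w, hwW, ?_⟩
      rw [indLM_apply', indLM_apply', indLM_apply', Set.indicator_indicator,
        Set.inter_eq_self_of_subset_left hFY]
    · refine le_trans hWspan ?_
      rw [Submodule.span_le]
      rintro y ⟨u, hu, rfl⟩
      have huW : u ∈ W := hWfW u hu
      have huX : support u ⊆ X := fun a hau => ⟨hWE huW hau, hBP a (hmemB u hu hau)⟩
      refine ⟨Y.indicator u, ⟨u, ⟨huW, huX⟩, rfl⟩, ?_⟩
      rw [indLM_apply', Set.indicator_indicator, Set.inter_eq_self_of_subset_left hFY]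
  have hG2a : conV (conV V X ⊓ FunOn Y) F = conV V F := by
    apply le_antisymm
    · rintro x ⟨y, ⟨hyc, _⟩, rfl⟩
      obtain ⟨v, hvV, rfl⟩ := hyc
      refine ⟨v, hvV, ?_⟩
      rw [indLM_apply', indLM_apply', indLM_apply', Set.indicator_indicator,
        Set.inter_eq_self_of_subset_left hFX]
    · refine le_trans hVspan ?_
      rw [Submodule.span_le]
      rintro y ⟨u, hu, rfl⟩
      have huV : u ∈ V := hVfV u hu
      have huY : support (X.indicator u) ⊆ Y := by
        rw [Set.support_indicator]
        rintro a ⟨haX, hau⟩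
        exact ⟨haX.1, fun h => h.elim haX.2 (hAQ a (hmemA u hu hau))⟩
      refine ⟨X.indicator u, ⟨⟨u, huV, rfl⟩, huY⟩, ?_⟩
      rw [indLM_apply', Set.indicator_indicator, Set.inter_eq_self_of_subset_left hFX]
  have hG2b : conV (W ⊓ FunOn X) Y ⊓ FunOn F = W ⊓ FunOn F := by
    apply le_antisymm
    · rintro x ⟨hxc, hxF⟩
      obtain ⟨w, hw, rfl⟩ := hxc
      obtain ⟨hwW, hwX⟩ := hw
      rw [indLM_apply'] at hxF ⊢
      have hsupp : support (Y.indicator w) ⊆ F := hxF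
      have heq : Y.indicator w = F.indicator w := ind_eq_ind hFY hsupp
      have hwA : ∀ u ∈ Vf, support w ∩ support u ⊆ F := by
        rintro u hu a ⟨haw, hau⟩
        have haX : a ∈ X := hwX haw
        have haY : a ∈ Y := ⟨haX.1, fun h => h.elim haX.2 (hAQ a (hmemA u hu hau))⟩
        apply hsupp
        rw [Set.support_indicator]
        exact ⟨haY, haw⟩
      have hmem := indicator_mem_of_inter_subset hO2.symm horthWV hF hFfin Vf hVfV hVspan
        hwW hwA
      rw [heq]
      exact ⟨hmem, heq ▸ hxF⟩
    · rintro x ⟨hxW, hxF⟩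
      have hxF' : support x ⊆ F := hxF
      refine ⟨⟨x, ⟨hxW, hxF'.trans hFX⟩, ?_⟩, hxF⟩
      rw [indLM_apply', Set.indicator_eq_self]
      exact hxF'.trans hFY
  refine ⟨P, Q, hPF, hQF, hPQ, hcof, ?_, ?_⟩
  · simp only [pairRes, pairCon]
    rw [Prod.mk.injEq]
    exact ⟨hG1a, hG1b⟩
  · simp only [pairRes, pairCon]
    rw [Prod.mk.injEq]
    exact ⟨hG2a, hG2b⟩
end

section
/- Let k be a field and 𝒯 = (T, V̄, W̄) a neat tree of presentations over k. Let (S, v̄) be a pre-vector of 𝒯 and (S', w̄) a pre-covector of 𝒯 such that the intersection S ∩ S' of the two subtrees contains no ray (no one-way infinite path). Then the underlying vector of (S, v̄) and the underlying covector of (S', w̄) are orthogonal: the intersection of their supports is finite and Σ_{e ∈ E(𝒯)} of the product of their values at e equals 0. -/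
open Function Set

open Function Set

/-- A tree of presentations over `k`: a tree `T` on the node type `τ` with a presentation
`(Vb t, Wb t)` on the ground set `Es t ⊆ α` at each node `t`, such that the ground sets of
two distinct nodes have finite intersection, and intersect only if the nodes are adjacent. -/
structure TreePres (k α τ : Type*) [Field k] where
  T : SimpleGraph τ
  tree : T.IsTree
  Es : τ → Set α
  Vb : τ → Submodule k (α → k)
  Wb : τ → Submodule k (α → k)
  pres : ∀ t, IsPresentationOn (Es t) (Vb t) (Wb t)
  finInter : ∀ t t', t ≠ t' → (Es t ∩ Es t').Finite
  adjInter : ∀ t t', (Es t ∩ Es t').Nonempty → t = t' ∨ T.Adj t t'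

namespace TreePres

variable {k α τ : Type*} [Field k]

/-- The ground set `E(𝒯)` of a tree of presentations: the union of all `E(t)` minus
all the sets of dummy edges `E(tt') = E(t) ∩ E(t')`. -/
def ground (𝒯 : TreePres k α τ) : Set α :=
  (⋃ t, 𝒯.Es t) \ ⋃ (t) (t') (_ : 𝒯.T.Adj t t'), 𝒯.Es t ∩ 𝒯.Es t'

/-- `(S, vb)` is a pre-vector of `𝒯`: `S` spans a subtree, `vb t ∈ V̄(t)` for `t ∈ S`, and
for every edge `tu` of `T` with `t ∈ S`: if `u ∈ S` then
`vb t ↾ E(tu) = vb u ↾ E(tu) ≠ 0`, and otherwise `vb t ↾ E(tu) = 0`. -/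
def IsPreVector (𝒯 : TreePres k α τ) (S : Set τ) (vb : τ → α → k) : Prop :=
  ((𝒯.T.induce S).Connected) ∧ (∀ t ∈ S, vb t ∈ 𝒯.Vb t) ∧
    ∀ t ∈ S, ∀ u : τ, 𝒯.T.Adj t u →
      (u ∈ S → ((𝒯.Es t ∩ 𝒯.Es u).indicator (vb t) = (𝒯.Es t ∩ 𝒯.Es u).indicator (vb u) ∧
        (𝒯.Es t ∩ 𝒯.Es u).indicator (vb t) ≠ 0)) ∧
      (u ∉ S → (𝒯.Es t ∩ 𝒯.Es u).indicator (vb t) = 0)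

/-- `(S, wb)` is a pre-covector of `𝒯`: as for pre-vectors, but with
`wb t ↾ E(tu) = − wb u ↾ E(tu) ≠ 0` on edges of `S` (note the sign change). -/
def IsPreCovector (𝒯 : TreePres k α τ) (S : Set τ) (wb : τ → α → k) : Prop :=
  ((𝒯.T.induce S).Connected) ∧ (∀ t ∈ S, wb t ∈ 𝒯.Wb t) ∧
    ∀ t ∈ S, ∀ u : τ, 𝒯.T.Adj t u →
      (u ∈ S → ((𝒯.Es t ∩ 𝒯.Es u).indicator (wb t) = - (𝒯.Es t ∩ 𝒯.Es u).indicator (wb u) ∧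
        (𝒯.Es t ∩ 𝒯.Es u).indicator (wb t) ≠ 0)) ∧
      (u ∉ S → (𝒯.Es t ∩ 𝒯.Es u).indicator (wb t) = 0)

/-- The underlying vector (or covector) of `(S, vb)`: its value at `e ∈ E(𝒯)` is `vb t e`
if `e ∈ E(t)` for some `t ∈ S`, and `0` otherwise. -/
noncomputable def underlying (𝒯 : TreePres k α τ) (S : Set τ) (vb : τ → α → k) : α → k :=
  open Classical in
  fun e => if h : e ∈ 𝒯.ground ∧ ∃ t, t ∈ S ∧ e ∈ 𝒯.Es t then vb h.2.choose e else 0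

/-- The subspace of `k^{E(𝒯)}` generated by the underlying vectors of all pre-vectors
(appropriate for star-shaped trees, which contain no rays). -/
noncomputable def Vspace (𝒯 : TreePres k α τ) : Submodule k (α → k) :=
  Submodule.span k {u | ∃ S vb, 𝒯.IsPreVector S vb ∧ u = 𝒯.underlying S vb}

/-- The subspace of `k^{E(𝒯)}` generated by the underlying covectors of all pre-covectors
(appropriate for star-shaped trees, which contain no rays). -/
noncomputable def Wspace (𝒯 : TreePres k α τ) : Submodule k (α → k) :=
  Submodule.span k {u | ∃ S wb, 𝒯.IsPreCovector S wb ∧ u = 𝒯.underlying S wb}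

end TreePres

/-- A presentation `(V, W)` is neat with respect to a family `ℱ` of sets if for all
`v ∈ V`, `w ∈ W` only finitely many `F ∈ ℱ` meet the supports of both. -/
def NeatFam {k α : Type*} [Field k] (V W : Submodule k (α → k)) (ℱ : Set (Set α)) : Prop :=
  ∀ v ∈ V, ∀ w ∈ W,
    {F ∈ ℱ | (F ∩ Function.support v).Nonempty ∧ (F ∩ Function.support w).Nonempty}.Finite

/-- A tree of presentations is neat if each node's presentation is neat with respect to
the family of sets `E(tu)` over the neighbours `u` of `t`. -/
def TreePres.IsNeat {k α τ : Type*} [Field k] (𝒯 : TreePres k α τ) : Prop :=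
  ∀ t, NeatFam (𝒯.Vb t) (𝒯.Wb t) {F | ∃ u, 𝒯.T.Adj t u ∧ F = 𝒯.Es t ∩ 𝒯.Es u}


/-! ### Auxiliary lemmas for the proof -/

namespace TPAux

open Function Set SimpleGraph

section Graph

variable {V : Type*} {G : SimpleGraph V}

lemma getVert_mem_support {u v : V} (w : G.Walk u v) (n : ℕ) : w.getVert n ∈ w.support := by
  induction w generalizing n with
  | nil => cases n <;> simp [Walk.getVert]
  | cons h q ih =>
    cases n with
    | zero => simp [Walk.getVert]
    | succ n =>
      simp only [Walk.getVert_cons_succ, Walk.support_cons, List.mem_cons]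
      exact Or.inr (ih n)

lemma path_getVert_ne {u v : V} {w : G.Walk u v} (hw : w.IsPath) :
    ∀ m n, m < n → n ≤ w.length → w.getVert m ≠ w.getVert n := by
  induction w with
  | nil => intro m n hmn hn; simp at hn; omega
  | cons h q ih =>
    intro m n hmn hn heq
    rw [Walk.cons_isPath_iff] at hw
    cases m with
    | zero =>
      obtain ⟨n, rfl⟩ : ∃ n', n = n' + 1 := ⟨n - 1, by omega⟩
      rw [Walk.getVert_zero, Walk.getVert_cons_succ] at heq
      exact hw.2 (heq ▸ getVert_mem_support q n)
    | succ m =>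
      obtain ⟨n, rfl⟩ : ∃ n', n = n' + 1 := ⟨n - 1, by omega⟩
      rw [Walk.getVert_cons_succ, Walk.getVert_cons_succ] at heq
      exact ih hw.1 m n (by omega) (by simpa using hn) heq

lemma no_triangle (hG : G.IsAcyclic) {a b c : V}
    (hab : G.Adj a b) (hac : G.Adj a c) (hbc : G.Adj b c) : False := by
  have h12 : (⟨Walk.cons hbc Walk.nil, by simp [hbc.ne]⟩ : G.Path b c) =
      ⟨Walk.cons hab.symm (Walk.cons hac Walk.nil), by
        simp [Walk.cons_isPath_iff, hab.ne', hbc.ne, hac.ne]⟩ :=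
    hG.path_unique _ _
  simpa using congrArg Walk.length (Subtype.ext_iff.mp h12)

lemma exists_path_support_subset {S : Set V} (h : (G.induce S).Connected) {a b : V}
    (ha : a ∈ S) (hb : b ∈ S) :
    ∃ w : G.Walk a b, w.IsPath ∧ ∀ x ∈ w.support, x ∈ S := by
  classical
  obtain ⟨w⟩ := h.preconnected ⟨a, ha⟩ ⟨b, hb⟩
  let w' : G.Walk a b := w.map (Embedding.induce S).toHom
  refine ⟨w'.toPath.1, w'.toPath.2, fun x hx => ?_⟩
  have hx' := Walk.support_toPath_subset w' hx
  rw [show w'.support = w.support.map (Embedding.induce S).toHom from Walk.support_map _ _] at hx'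
  obtain ⟨y, -, rfl⟩ := List.mem_map.mp hx'
  exact y.2

lemma tree_inter_walk (hG : G.IsTree) {S S' : Set V}
    (hS : (G.induce S).Connected) (hS' : (G.induce S').Connected) {a b : V}
    (ha : a ∈ S ∩ S') (hb : b ∈ S ∩ S') :
    ∃ w : G.Walk a b, w.IsPath ∧ ∀ x ∈ w.support, x ∈ S ∩ S' := by
  obtain ⟨w1, h1, hs1⟩ := exists_path_support_subset hS ha.1 hb.1
  obtain ⟨w2, h2, hs2⟩ := exists_path_support_subset hS' ha.2 hb.2
  have heq : (⟨w1, h1⟩ : G.Path a b) = ⟨w2, h2⟩ := hG.IsAcyclic.path_unique _ _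
  have hw : w1 = w2 := congrArg Subtype.val heq
  exact ⟨w1, h1, fun x hx => ⟨hs1 x hx, hs2 x (hw ▸ hx)⟩⟩

lemma exists_ray {A : Set V}
    (hconn : ∀ a ∈ A, ∀ b ∈ A, ∃ w : G.Walk a b, w.IsPath ∧ ∀ x ∈ w.support, x ∈ A)
    (hlf : ∀ t ∈ A, {u | u ∈ A ∧ G.Adj t u}.Finite)
    (hinf : A.Infinite) :
    ∃ f : ℕ → V, Function.Injective f ∧ (∀ n, f n ∈ A) ∧ ∀ n, G.Adj (f n) (f (n + 1)) := by
  classical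
  obtain ⟨t₀, ht₀⟩ := hinf.nonempty
  have H : ∀ a : A, ∃ w : G.Walk t₀ (a : V), w.IsPath ∧ ∀ x ∈ w.support, x ∈ A :=
    fun a => hconn t₀ ht₀ a a.2
  choose p hp hps using H
  set Inv : ℕ → V × Set A → Prop := fun n s =>
    s.2.Infinite ∧ ∀ a ∈ s.2, n ≤ (p a).length ∧ (p a).getVert n = s.1 with hInvdef
  have base : Inv 0 (t₀, Set.univ) := by
    constructor
    · have := hinf.to_subtype; exact Set.infinite_univ
    · intro a _; exact ⟨Nat.zero_le _, Walk.getVert_zero _⟩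
  have step : ∀ n (s : V × Set A), Inv n s →
      ∃ s' : V × Set A, Inv (n+1) s' ∧ s'.2 ⊆ s.2 ∧ G.Adj s.1 s'.1 := by
    rintro n ⟨t, B⟩ ⟨hBinf, hB⟩
    obtain ⟨a₀, ha₀⟩ := hBinf.nonempty
    have htA : t ∈ A := by
      have h1 := hps a₀ _ (getVert_mem_support (p a₀) n)
      rwa [(hB a₀ ha₀).2] at h1
    have hsub : B \ {a : A | (a : V) = t} ⊆ {a | a ∈ B ∧ n < (p a).length} := by
      rintro a ⟨haB, hat⟩
      refine ⟨haB, lt_of_le_of_ne (hB a haB).1 ?_⟩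
      intro hlen
      apply hat
      have h2 := (p a).getVert_length
      rw [← hlen, (hB a haB).2] at h2
      exact h2.symm
    have hfin : ({a : A | (a : V) = t}).Finite := by
      apply Set.Finite.subset (Set.finite_singleton (⟨t, htA⟩ : A))
      intro a ha; exact Set.mem_singleton_iff.mpr (Subtype.ext ha)
    have hB''inf : {a | a ∈ B ∧ n < (p a).length}.Infinite :=
      (hBinf.diff hfin).mono hsub
    have hex : ∃ u ∈ {u | u ∈ A ∧ G.Adj t u},
        {a | a ∈ B ∧ n < (p a).length ∧ (p a).getVert (n+1) = u}.Infinite := by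
      by_contra hcon
      push_neg at hcon
      have hcover : {a | a ∈ B ∧ n < (p a).length} ⊆
          ⋃ u ∈ {u | u ∈ A ∧ G.Adj t u},
            {a | a ∈ B ∧ n < (p a).length ∧ (p a).getVert (n+1) = u} := by
        rintro a ⟨haB, hlen⟩
        have hadj : G.Adj t ((p a).getVert (n+1)) := by
          have h3 := (p a).adj_getVert_succ hlen
          rwa [(hB a haB).2] at h3
        have hmemA : (p a).getVert (n+1) ∈ A := hps a _ (getVert_mem_support _ _)
        exact Set.mem_biUnion ⟨hmemA, hadj⟩ ⟨haB, hlen, rfl⟩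
      exact hB''inf (((hlf t htA).biUnion
        (fun u hu => hcon u hu)).subset hcover)
    obtain ⟨u, hu, hfib⟩ := hex
    refine ⟨(u, {a | a ∈ B ∧ n < (p a).length ∧ (p a).getVert (n+1) = u}),
      ⟨hfib, fun a ha => ⟨ha.2.1, ha.2.2⟩⟩, fun a ha => ha.1, hu.2⟩
  choose nxt hnxt1 hnxt2 hnxt3 using step
  let F : ∀ _ : ℕ, {s : V × Set A // Inv _ s} := fun n =>
    Nat.rec (motive := fun n => {s : V × Set A // Inv n s}) ⟨(t₀, Set.univ), base⟩
      (fun n ih => ⟨nxt n ih.1 ih.2, hnxt1 n ih.1 ih.2⟩) n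
  let f : ℕ → V := fun n => ((F n).1).1
  have hadj : ∀ n, G.Adj (f n) (f (n+1)) := fun n => hnxt3 n (F n).1 (F n).2
  have hmono : ∀ n, ((F (n+1)).1).2 ⊆ ((F n).1).2 := fun n => hnxt2 n (F n).1 (F n).2
  have hmono' : ∀ m n, m ≤ n → ((F n).1).2 ⊆ ((F m).1).2 := by
    intro m n h
    induction h with
    | refl => exact subset_rfl
    | step _ ih => exact (hmono _).trans ih
  have hval : ∀ n, ∀ a ∈ ((F n).1).2, n ≤ (p a).length ∧ (p a).getVert n = f n :=
    fun n => ((F n).2).2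
  have hfA : ∀ n, f n ∈ A := by
    intro n
    obtain ⟨a, ha⟩ := ((F n).2).1.nonempty
    rw [← (hval n a ha).2]
    exact hps a _ (getVert_mem_support _ _)
  have hinj : Function.Injective f := by
    have key : ∀ m n, m < n → f m ≠ f n := by
      intro m n h hmn
      obtain ⟨a, ha⟩ := ((F n).2).1.nonempty
      have ham := hmono' m n h.le ha
      exact path_getVert_ne (hp a) m n h (hval n a ha).1
        (by rw [(hval m a ham).2, (hval n a ha).2]; exact hmn)
    intro m n hmn
    by_contra hne
    rcases lt_or_gt_of_ne hne with h | h
    · exact key m n h hmn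
    · exact key n m h hmn.symm
  exact ⟨f, hinj, hfA, hadj⟩

end Graph

section Tree

variable {k α τ : Type*} [Field k]

lemma mem_FunOn {E : Set α} {v : α → k} : v ∈ FunOn (k := k) E ↔ support v ⊆ E := Iff.rfl

lemma mem_ground_iff {𝒯 : TreePres k α τ} {e : α} :
    e ∈ 𝒯.ground ↔ (∃ t, e ∈ 𝒯.Es t) ∧ ∀ t t', 𝒯.T.Adj t t' → e ∈ 𝒯.Es t → e ∉ 𝒯.Es t' := by
  simp only [TreePres.ground, mem_diff]
  constructor
  · rintro ⟨h1, h2⟩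
    simp only [mem_iUnion] at h1 h2
    push_neg at h2
    exact ⟨h1, fun t t' hadj ht ht' => h2 t t' hadj ⟨ht, ht'⟩⟩
  · rintro ⟨h1, h2⟩
    refine ⟨by simpa [mem_iUnion] using h1, ?_⟩
    simp only [mem_iUnion, not_exists]
    rintro t t' hadj ⟨ht, ht'⟩
    exact h2 t t' hadj ht ht'

lemma ground_unique {𝒯 : TreePres k α τ} {e : α} {t t' : τ} (he : e ∈ 𝒯.ground)
    (h1 : e ∈ 𝒯.Es t) (h2 : e ∈ 𝒯.Es t') : t = t' := by
  by_contra hne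
  rcases 𝒯.adjInter t t' ⟨e, h1, h2⟩ with h | h
  · exact hne h
  · exact (mem_ground_iff.mp he).2 t t' h h1 h2

lemma underlying_apply (𝒯 : TreePres k α τ) {S : Set τ} {vb : τ → α → k} {e : α} {t : τ}
    (he : e ∈ 𝒯.ground) (ht : t ∈ S) (hte : e ∈ 𝒯.Es t) :
    𝒯.underlying S vb e = vb t e := by
  have hcond : e ∈ 𝒯.ground ∧ ∃ t, t ∈ S ∧ e ∈ 𝒯.Es t := ⟨he, t, ht, hte⟩
  simp only [TreePres.underlying]
  rw [dif_pos hcond]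
  have hspec := hcond.2.choose_spec
  have : hcond.2.choose = t := ground_unique he hspec.2 hte
  rw [this]

lemma underlying_eq_zero (𝒯 : TreePres k α τ) {S : Set τ} {vb : τ → α → k} {e : α}
    (h : ¬(e ∈ 𝒯.ground ∧ ∃ t, t ∈ S ∧ e ∈ 𝒯.Es t)) : 𝒯.underlying S vb e = 0 := by
  simp only [TreePres.underlying]
  rw [dif_neg h]

lemma underlying_ne_zero (𝒯 : TreePres k α τ) {S : Set τ} {vb : τ → α → k} {e : α}
    (h : 𝒯.underlying S vb e ≠ 0) :
    ∃ t ∈ S, e ∈ 𝒯.ground ∧ e ∈ 𝒯.Es t ∧ 𝒯.underlying S vb e = vb t e := by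
  by_cases hc : e ∈ 𝒯.ground ∧ ∃ t, t ∈ S ∧ e ∈ 𝒯.Es t
  · obtain ⟨hg, t, htS, hte⟩ := hc
    exact ⟨t, htS, hg, hte, underlying_apply 𝒯 hg htS hte⟩
  · exact absurd (underlying_eq_zero 𝒯 hc) h

lemma indicator_ne_zero' {s : Set α} {f : α → k} (h : s.indicator f ≠ 0) :
    ∃ e ∈ s, f e ≠ 0 := by
  obtain ⟨e, he⟩ := Function.ne_iff.mp h
  by_cases hm : e ∈ s
  · exact ⟨e, hm, by rwa [Set.indicator_of_mem hm] at he⟩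
  · simp [Set.indicator_of_notMem hm] at he

open Classical in
/-- The product of `vb t` and `wb t` restricted to the part of `E(t)` inside the ground set. -/
noncomputable def qfun (𝒯 : TreePres k α τ) (vb wb : τ → α → k) (t : τ) (e : α) : k :=
  if e ∈ 𝒯.ground ∧ e ∈ 𝒯.Es t then vb t e * wb t e else 0

open Classical in
/-- The product of `vb t` and `wb t` restricted to the edge set `E(tu)`. -/
noncomputable def rfun (𝒯 : TreePres k α τ) (vb wb : τ → α → k) (t u : τ) (e : α) : k :=
  if e ∈ 𝒯.Es t ∧ e ∈ 𝒯.Es u then vb t e * wb t e else 0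

end Tree

end TPAux

/-- In a neat tree of presentations, if `(S, vb)` is a pre-vector and
`(S', wb)` a pre-covector such that the intersection of the two subtrees contains no ray,
then the underlying vector and covector are orthogonal: the intersection of their supports
is finite and the sum over `E(𝒯)` of the products of their values is `0`. -/
theorem neat_underlying_orthogonal {k α τ : Type*} [Field k]
    (𝒯 : TreePres k α τ) (hneat : 𝒯.IsNeat)
    (S : Set τ) (vb : τ → α → k) (hv : 𝒯.IsPreVector S vb)
    (S' : Set τ) (wb : τ → α → k) (hw : 𝒯.IsPreCovector S' wb)
    (hray : ¬ ∃ f : ℕ → τ, Function.Injective f ∧ (∀ n, f n ∈ S ∩ S') ∧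
      ∀ n, 𝒯.T.Adj (f n) (f (n + 1))) :
    Orthog (𝒯.underlying S vb) (𝒯.underlying S' wb) := by
  classical
  obtain ⟨hScon, hvmem, hvcond⟩ := hv
  obtain ⟨hS'con, hwmem, hwcond⟩ := hw
  set A : Set τ := S ∩ S' with hAdef
  have tri : ∀ {a b c : τ}, 𝒯.T.Adj a b → 𝒯.T.Adj a c → 𝒯.T.Adj b c → False :=
    fun hab hac hbc => TPAux.no_triangle 𝒯.tree.IsAcyclic hab hac hbc
  have horth : ∀ t ∈ A, (Function.support (vb t) ∩ Function.support (wb t)).Finite ∧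
      ∑ᶠ e, vb t e * wb t e = 0 :=
    fun t ht => (𝒯.pres t).2.2.1 (vb t) (hvmem t ht.1) (wb t) (hwmem t ht.2)
  have hsuppv : ∀ t ∈ S, Function.support (vb t) ⊆ 𝒯.Es t :=
    fun t ht => TPAux.mem_FunOn.mp ((𝒯.pres t).1 (hvmem t ht))
  have hsuppw : ∀ t ∈ S', Function.support (wb t) ⊆ 𝒯.Es t :=
    fun t ht => TPAux.mem_FunOn.mp ((𝒯.pres t).2.1 (hwmem t ht))
  have hprod : ∀ e, 𝒯.underlying S vb e * 𝒯.underlying S' wb e ≠ 0 →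
      ∃ t, t ∈ A ∧ e ∈ 𝒯.ground ∧ e ∈ 𝒯.Es t ∧ vb t e ≠ 0 ∧ wb t e ≠ 0 ∧
        𝒯.underlying S vb e = vb t e ∧ 𝒯.underlying S' wb e = wb t e := by
    intro e hne
    obtain ⟨t, htS, hg, hte, hveq⟩ := TPAux.underlying_ne_zero 𝒯 (left_ne_zero_of_mul hne)
    obtain ⟨t', ht'S, -, hte', hweq⟩ := TPAux.underlying_ne_zero 𝒯 (right_ne_zero_of_mul hne)
    obtain rfl : t' = t := TPAux.ground_unique hg hte' hte
    exact ⟨t', ⟨htS, ht'S⟩, hg, hte,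
      by rw [← hveq]; exact left_ne_zero_of_mul hne,
      by rw [← hweq]; exact right_ne_zero_of_mul hne, hveq, hweq⟩
  have hAfin : A.Finite := by
    by_contra hAinf
    apply hray
    refine TPAux.exists_ray ?_ ?_ hAinf
    · exact fun a ha b hb => TPAux.tree_inter_walk 𝒯.tree hScon hS'con ha hb
    · intro t ht
      have hneatt := hneat t (vb t) (hvmem t ht.1) (wb t) (hwmem t ht.2)
      refine Set.Finite.of_finite_image (f := fun u => 𝒯.Es t ∩ 𝒯.Es u)
        (hneatt.subset ?_) ?_
      · rintro F ⟨u, ⟨huA, hadj⟩, rfl⟩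
        refine ⟨⟨u, hadj, rfl⟩, ?_, ?_⟩
        · obtain ⟨e, hes, hev⟩ := TPAux.indicator_ne_zero' ((hvcond t ht.1 u hadj).1 huA.1).2
          exact ⟨e, hes, hev⟩
        · obtain ⟨e, hes, hew⟩ := TPAux.indicator_ne_zero' ((hwcond t ht.2 u hadj).1 huA.2).2
          exact ⟨e, hes, hew⟩
      · rintro u ⟨huA, hadjtu⟩ u' ⟨hu'A, hadjtu'⟩ heq
        by_contra hne'
        obtain ⟨e, hes, -⟩ := TPAux.indicator_ne_zero' ((hvcond t ht.1 u hadjtu).1 huA.1).2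
        have heq' : 𝒯.Es t ∩ 𝒯.Es u = 𝒯.Es t ∩ 𝒯.Es u' := heq
        have hes' : e ∈ 𝒯.Es t ∩ 𝒯.Es u' := heq' ▸ hes
        rcases 𝒯.adjInter u u' ⟨e, hes.2, hes'.2⟩ with h | h
        · exact hne' h
        · exact tri hadjtu hadjtu' h
  set Af : Finset τ := hAfin.toFinset with hAfdef
  have hAf : ∀ {t}, t ∈ Af ↔ t ∈ A := fun {t} => Set.Finite.mem_toFinset _
  have hXfin : ∀ t ∈ A, (Function.support (vb t) ∩ Function.support (wb t)).Finite :=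
    fun t ht => (horth t ht).1
  have hΩfin : (⋃ t ∈ A, (Function.support (vb t) ∩ Function.support (wb t))).Finite :=
    hAfin.biUnion hXfin
  set Ω : Finset α := hΩfin.toFinset with hΩdef
  have hΩcoe : (↑Ω : Set α) = ⋃ t ∈ A, (Function.support (vb t) ∩ Function.support (wb t)) :=
    Set.Finite.coe_toFinset _
  have pointA : ∀ e, 𝒯.underlying S vb e * 𝒯.underlying S' wb e =
      ∑ t ∈ Af, TPAux.qfun 𝒯 vb wb t e := by
    intro e
    by_cases hne : 𝒯.underlying S vb e * 𝒯.underlying S' wb e = 0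
    · rw [hne]
      symm
      apply Finset.sum_eq_zero
      intro t htf
      have htA : t ∈ A := hAf.mp htf
      by_cases hc : e ∈ 𝒯.ground ∧ e ∈ 𝒯.Es t
      · have h1 := TPAux.underlying_apply 𝒯 (S := S) (vb := vb) hc.1 htA.1 hc.2
        have h2 := TPAux.underlying_apply 𝒯 (S := S') (vb := wb) hc.1 htA.2 hc.2
        simp only [TPAux.qfun]
        rw [if_pos hc, ← h1, ← h2]
        exact hne
      · simp only [TPAux.qfun]
        rw [if_neg hc]
    · obtain ⟨t, htA, hg, hte, -, -, hveq, hweq⟩ := hprod e hne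
      have hsum : ∑ t' ∈ Af, TPAux.qfun 𝒯 vb wb t' e = TPAux.qfun 𝒯 vb wb t e := by
        apply Finset.sum_eq_single t
        · intro t' ht'f hne'
          simp only [TPAux.qfun]
          rw [if_neg]
          rintro ⟨hg', hte'⟩
          exact hne' (TPAux.ground_unique hg' hte' hte)
        · intro habs
          exact absurd (hAf.mpr htA) habs
      rw [hsum]
      simp only [TPAux.qfun]
      rw [if_pos ⟨hg, hte⟩, hveq, hweq]
  have pointB : ∀ t ∈ A, ∀ e, vb t e * wb t e =
      TPAux.qfun 𝒯 vb wb t e + ∑ u ∈ Af.erase t, TPAux.rfun 𝒯 vb wb t u e := by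
    intro t htA e
    by_cases hne : vb t e * wb t e = 0
    · have hq : TPAux.qfun 𝒯 vb wb t e = 0 := by
        simp only [TPAux.qfun]; split
        · exact hne
        · rfl
      have hr : ∀ u ∈ Af.erase t, TPAux.rfun 𝒯 vb wb t u e = 0 := by
        intro u _
        simp only [TPAux.rfun]; split
        · exact hne
        · rfl
      rw [hne, hq, Finset.sum_eq_zero hr, add_zero]
    · have hvne := left_ne_zero_of_mul hne
      have hwne := right_ne_zero_of_mul hne
      have hte : e ∈ 𝒯.Es t := hsuppv t htA.1 hvne
      by_cases hg : e ∈ 𝒯.ground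
      · have hq : TPAux.qfun 𝒯 vb wb t e = vb t e * wb t e := by
          simp only [TPAux.qfun]; rw [if_pos ⟨hg, hte⟩]
        have hr : ∀ u ∈ Af.erase t, TPAux.rfun 𝒯 vb wb t u e = 0 := by
          intro u huf
          simp only [TPAux.rfun]; rw [if_neg]
          rintro ⟨-, hteu⟩
          exact (Finset.mem_erase.mp huf).1 (TPAux.ground_unique hg hteu hte)
        rw [hq, Finset.sum_eq_zero hr, add_zero]
      · have hq : TPAux.qfun 𝒯 vb wb t e = 0 := by
          simp only [TPAux.qfun]; rw [if_neg (fun hc => hg hc.1)]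
        have hB : ¬ ∀ s s', 𝒯.T.Adj s s' → e ∈ 𝒯.Es s → e ∉ 𝒯.Es s' :=
          fun hB => hg (TPAux.mem_ground_iff.mpr ⟨⟨t, hte⟩, hB⟩)
        push_neg at hB
        obtain ⟨s, s', hadj, hes, hes'⟩ := hB
        have hu : ∃ u, u ≠ t ∧ 𝒯.T.Adj t u ∧ e ∈ 𝒯.Es u := by
          rcases eq_or_ne s t with rfl | hst
          · exact ⟨s', hadj.ne', hadj, hes'⟩
          · refine ⟨s, hst, ?_, hes⟩
            rcases 𝒯.adjInter t s ⟨e, hte, hes⟩ with h | h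
            · exact absurd h.symm hst
            · exact h
        obtain ⟨u, hut, htu, heu⟩ := hu
        have huS : u ∈ S := by
          by_contra h
          have h0 := congrFun ((hvcond t htA.1 u htu).2 h) e
          rw [Set.indicator_of_mem (Set.mem_inter hte heu)] at h0
          exact hvne (by simpa using h0)
        have huS' : u ∈ S' := by
          by_contra h
          have h0 := congrFun ((hwcond t htA.2 u htu).2 h) e
          rw [Set.indicator_of_mem (Set.mem_inter hte heu)] at h0
          exact hwne (by simpa using h0)
        have hsum : ∑ u' ∈ Af.erase t, TPAux.rfun 𝒯 vb wb t u' e =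
            TPAux.rfun 𝒯 vb wb t u e := by
          apply Finset.sum_eq_single u
          · intro u' hu'f hne'
            simp only [TPAux.rfun]; rw [if_neg]
            rintro ⟨-, heu'⟩
            rcases 𝒯.adjInter u u' ⟨e, heu, heu'⟩ with h | h
            · exact hne' h.symm
            · have htu' : 𝒯.T.Adj t u' := by
                rcases 𝒯.adjInter t u' ⟨e, hte, heu'⟩ with h' | h'
                · exact absurd h'.symm (Finset.mem_erase.mp hu'f).1
                · exact h'
              exact tri htu htu' h
          · intro habs
            exact absurd (Finset.mem_erase.mpr ⟨hut, hAf.mpr ⟨huS, huS'⟩⟩) habs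
        rw [hq, hsum, zero_add]
        simp only [TPAux.rfun]
        rw [if_pos ⟨hte, heu⟩]
  have hsupp_prod :
      Function.support (fun e => 𝒯.underlying S vb e * 𝒯.underlying S' wb e) ⊆ ↑Ω := by
    intro e he
    obtain ⟨t, htA, -, -, hv1, hw1, -, -⟩ := hprod e he
    rw [hΩcoe]
    exact Set.mem_biUnion htA ⟨hv1, hw1⟩
  have hsupp_node : ∀ t ∈ A, Function.support (fun e => vb t e * wb t e) ⊆ ↑Ω := by
    intro t htA e he
    rw [hΩcoe]
    exact Set.mem_biUnion htA ⟨left_ne_zero_of_mul he, right_ne_zero_of_mul he⟩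
  refine ⟨?_, ?_⟩
  · apply hΩfin.subset
    rintro e ⟨h1, h2⟩
    obtain ⟨t, htA, -, -, hv1, hw1, -, -⟩ := hprod e (mul_ne_zero h1 h2)
    exact Set.mem_biUnion htA ⟨hv1, hw1⟩
  · rw [finsum_eq_finset_sum_of_support_subset _ hsupp_prod]
    have hnode : ∀ t ∈ Af, ∑ e ∈ Ω, TPAux.qfun 𝒯 vb wb t e =
        - ∑ u ∈ Af.erase t, ∑ e ∈ Ω, TPAux.rfun 𝒯 vb wb t u e := by
      intro t htf
      have htA : t ∈ A := hAf.mp htf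
      have h0 : ∑ e ∈ Ω, vb t e * wb t e = 0 := by
        rw [← finsum_eq_finset_sum_of_support_subset _ (hsupp_node t htA)]
        exact (horth t htA).2
      have h1 : ∑ e ∈ Ω, vb t e * wb t e = ∑ e ∈ Ω, TPAux.qfun 𝒯 vb wb t e +
          ∑ e ∈ Ω, ∑ u ∈ Af.erase t, TPAux.rfun 𝒯 vb wb t u e := by
        rw [← Finset.sum_add_distrib]
        exact Finset.sum_congr rfl fun e _ => pointB t htA e
      rw [h0, Finset.sum_comm] at h1
      exact eq_neg_of_add_eq_zero_left h1.symm
    have hD : ∑ t ∈ Af, ∑ u ∈ Af.erase t, (∑ e ∈ Ω, TPAux.rfun 𝒯 vb wb t u e) = 0 := by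
      rw [Finset.sum_sigma' Af (fun t => Af.erase t)
        (fun t u => ∑ e ∈ Ω, TPAux.rfun 𝒯 vb wb t u e)]
      refine Finset.sum_involution (fun x _ => ⟨x.2, x.1⟩) ?_ ?_ ?_ ?_
      · rintro ⟨t, u⟩ hx
        rw [Finset.mem_sigma] at hx
        have htA := hAf.mp hx.1
        have hu := Finset.mem_erase.mp hx.2
        have huA := hAf.mp hu.2
        have hre : ∀ e, TPAux.rfun 𝒯 vb wb t u e = - TPAux.rfun 𝒯 vb wb u t e := by
          intro e
          by_cases hc : e ∈ 𝒯.Es t ∧ e ∈ 𝒯.Es u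
          · have hadj : 𝒯.T.Adj t u := by
              rcases 𝒯.adjInter t u ⟨e, hc.1, hc.2⟩ with h | h
              · exact absurd h.symm hu.1
              · exact h
            have hvv : vb t e = vb u e := by
              have h0 := congrFun ((hvcond t htA.1 u hadj).1 huA.1).1 e
              rwa [Set.indicator_of_mem (Set.mem_inter hc.1 hc.2),
                Set.indicator_of_mem (Set.mem_inter hc.1 hc.2)] at h0
            have hww : wb t e = - wb u e := by
              have h0 := congrFun ((hwcond t htA.2 u hadj).1 huA.2).1 e
              rw [Set.indicator_of_mem (Set.mem_inter hc.1 hc.2), Pi.neg_apply,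
                Set.indicator_of_mem (Set.mem_inter hc.1 hc.2)] at h0
              exact h0
            simp only [TPAux.rfun]
            rw [if_pos hc, if_pos ⟨hc.2, hc.1⟩, hvv, hww]
            ring
          · simp only [TPAux.rfun]
            rw [if_neg hc, if_neg (fun h => hc ⟨h.2, h.1⟩), neg_zero]
        have hs : (∑ e ∈ Ω, TPAux.rfun 𝒯 vb wb t u e) =
            - ∑ e ∈ Ω, TPAux.rfun 𝒯 vb wb u t e := by
          rw [← Finset.sum_neg_distrib]
          exact Finset.sum_congr rfl fun e _ => hre e
        rw [hs]
        exact neg_add_cancel _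
      · rintro ⟨t, u⟩ hx hne heq
        rw [Finset.mem_sigma] at hx
        exact (Finset.mem_erase.mp hx.2).1 (congrArg Sigma.fst heq)
      · rintro ⟨t, u⟩ hx
        rw [Finset.mem_sigma] at hx ⊢
        have hu := Finset.mem_erase.mp hx.2
        exact ⟨hu.2, Finset.mem_erase.mpr ⟨fun h => hu.1 h.symm, hx.1⟩⟩
      · rintro ⟨t, u⟩ hx
        rfl
    calc ∑ e ∈ Ω, 𝒯.underlying S vb e * 𝒯.underlying S' wb e
        = ∑ e ∈ Ω, ∑ t ∈ Af, TPAux.qfun 𝒯 vb wb t e :=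
          Finset.sum_congr rfl fun e _ => pointA e
      _ = ∑ t ∈ Af, ∑ e ∈ Ω, TPAux.qfun 𝒯 vb wb t e := Finset.sum_comm
      _ = ∑ t ∈ Af, - ∑ u ∈ Af.erase t, ∑ e ∈ Ω, TPAux.rfun 𝒯 vb wb t u e :=
          Finset.sum_congr rfl hnode
      _ = - ∑ t ∈ Af, ∑ u ∈ Af.erase t, ∑ e ∈ Ω, TPAux.rfun 𝒯 vb wb t u e := by
          rw [Finset.sum_neg_distrib]
      _ = 0 := by rw [hD, neg_zero]
end
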